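/- For N = 2n, the matrix −iV(θ) := (R(θ) − λI)^{-1}(R(θ) + λI) can be written as I + 2λX(θ) with X(θ) = (R(θ) − λI)^{-1}; consequently, whenever λ(θ)² ≠ e^{(m_{ab}^{(ε)}+m_{ba}^{(ε)})θ} for all a,b,ε, the diagonal potential entries are V_{bb,dd} = −(i/2)∑_ε [λ² + e^{(m_{bd}^{(ε)}+m_{db}^{(ε)})θ}]/[λ² − e^{(m_{bd}^{(ε)}+m_{db}^{(ε)})θ}]. -/

import Mathlib

open Matrix
open scoped Kronecker

noncomputable section

/-- The `N × N` matrix unit `(ab)`. -/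
def E {N : ℕ} (a b : Fin N) : Matrix (Fin N) (Fin N) ℂ := Matrix.single a b 1

/-- Sign `ε = ±1` coded by a Boolean. -/
def sgn (ε : Bool) : ℂ := if ε then 1 else -1

/-- The nested-sequence projector `P_{ab}^{(ε)}` for `N = 2n` (`ā = 2n+1-a` via `Fin.rev`). -/
def P {N : ℕ} (ε : Bool) (a b : Fin N) : Matrix (Fin N × Fin N) (Fin N × Fin N) ℂ :=
  (1 / 2 : ℂ) •
    (E a a ⊗ₖ E b b + E a.rev a.rev ⊗ₖ E b.rev b.rev +
      sgn ε • (E a a.rev ⊗ₖ E b b.rev + E a.rev a ⊗ₖ E b.rev b))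

/-- Embedding of `{1,…,n}` into `{1,…,2n}`. -/
def emb {n : ℕ} (i : Fin n) : Fin (2 * n) := Fin.castLE (by omega) i

/-- `R̂(θ) = ∑_ε ∑_{i,j=1}^n e^{m_{ij}^{(ε)}θ}(P_{ij}^{(ε)} + P_{i j̄}^{(ε)})`. -/
def Rhat {n : ℕ} (m : Bool → Fin (2 * n) → Fin (2 * n) → ℝ) (θ : ℝ) :
    Matrix (Fin (2 * n) × Fin (2 * n)) (Fin (2 * n) × Fin (2 * n)) ℂ :=
  ∑ ε : Bool, ∑ i : Fin n, ∑ j : Fin n,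
    (Real.exp (m ε (emb i) (emb j) * θ) : ℂ) •
      (P ε (emb i) (emb j) + P ε (emb i) (emb j).rev)

/-- The flip matrix `𝐏 = ∑_{a,b}(ab)⊗(ba)`. -/
def flipP (N : ℕ) : Matrix (Fin N × Fin N) (Fin N × Fin N) ℂ :=
  ∑ a : Fin N, ∑ b : Fin N, E a b ⊗ₖ E b a

/-- The closed form `X(θ) = (R(θ) − λI)⁻¹` of eq. (5.4). -/
def X {N : ℕ} (m : Bool → Fin N → Fin N → ℝ) (θ : ℝ) (lam : ℂ) :
    Matrix (Fin N × Fin N) (Fin N × Fin N) ℂ :=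
  (-(1 / 2) : ℂ) • ∑ ε : Bool, ∑ a : Fin N, ∑ b : Fin N,
    (lam ^ 2 - Complex.exp (((m ε a b + m ε b a) * θ : ℝ) : ℂ))⁻¹ •
      (lam • (E a a ⊗ₖ E b b + sgn ε • (E a a.rev ⊗ₖ E b b.rev)) +
        Complex.exp (((m ε b a * θ : ℝ)) : ℂ) •
          (E a b ⊗ₖ E b a + sgn ε • (E a b.rev ⊗ₖ E b a.rev)))

lemma E_apply {N : ℕ} (a b i j : Fin N) :
    E a b i j = if a = i ∧ b = j then 1 else 0 := rfl

@[simp] lemma sgn_true : sgn true = 1 := rfl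

@[simp] lemma sgn_false : sgn false = -1 := rfl

lemma rev_ne_self {n : ℕ} (a : Fin (2 * n)) : a.rev ≠ a := by
  intro h
  have h2 := congrArg Fin.val h
  have h3 := a.isLt
  rw [Fin.val_rev] at h2
  omega

lemma ind_mul {P Q : Prop} [Decidable P] [Decidable Q] :
    (if P then (1:ℂ) else 0) * (if Q then 1 else 0) = if P ∧ Q then 1 else 0 := by
  split_ifs <;> simp_all

lemma P_apply {N : ℕ} (ε : Bool) (a b : Fin N) (p q r s : Fin N) :
    P ε a b (p, q) (r, s) =
      (1/2 : ℂ) * ((if a = p ∧ a = r then (1:ℂ) else 0) * (if b = q ∧ b = s then 1 else 0)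
        + (if a.rev = p ∧ a.rev = r then (1:ℂ) else 0) * (if b.rev = q ∧ b.rev = s then 1 else 0)
        + sgn ε * ((if a = p ∧ a.rev = r then (1:ℂ) else 0) * (if b = q ∧ b.rev = s then 1 else 0)
          + (if a.rev = p ∧ a = r then (1:ℂ) else 0) * (if b.rev = q ∧ b = s then 1 else 0))) := by
  simp only [P, Matrix.smul_apply, Matrix.add_apply, Matrix.kroneckerMap_apply, E_apply,
    smul_eq_mul]

lemma ind_pair {n : ℕ} (a p r : Fin (2*n)) :
    (if a = p ∧ a = r then (1:ℂ) else 0) + (if a.rev = p ∧ a.rev = r then 1 else 0)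
      = if (a = p ∨ a.rev = p) ∧ r = p then 1 else 0 := by
  by_cases h1 : a = p
  · subst h1
    have hne : a ≠ a.rev := Ne.symm (rev_ne_self a)
    simp [rev_ne_self, hne, eq_comm]
  · by_cases h2 : a.rev = p
    · subst h2
      have hne : a ≠ a.rev := Ne.symm (rev_ne_self a)
      simp [h1, hne, eq_comm]
    · simp [h1, h2]

lemma ind_pair' {n : ℕ} (a p r : Fin (2*n)) :
    (if a = p ∧ a.rev = r then (1:ℂ) else 0) + (if a.rev = p ∧ a = r then 1 else 0)
      = if (a = p ∨ a.rev = p) ∧ r = p.rev then 1 else 0 := by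
  by_cases h1 : a = p
  · subst h1
    have hne : a ≠ a.rev := Ne.symm (rev_ne_self a)
    simp [rev_ne_self, hne, eq_comm]
  · by_cases h2 : a.rev = p
    · subst h2
      have hne : a ≠ a.rev := Ne.symm (rev_ne_self a)
      simp [h1, hne, eq_comm, Fin.rev_rev]
    · simp [h1, h2]

lemma PP_apply {n : ℕ} (ε : Bool) (a b p q r s : Fin (2*n)) :
    (P ε a b + P ε a b.rev) (p, q) (r, s) =
      (1/2 : ℂ) * ((if (a = p ∨ a.rev = p) ∧ r = p then (1:ℂ) else 0)
          * (if (b = q ∨ b.rev = q) ∧ s = q then 1 else 0)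
        + sgn ε * ((if (a = p ∨ a.rev = p) ∧ r = p.rev then (1:ℂ) else 0)
          * (if (b = q ∨ b.rev = q) ∧ s = q.rev then 1 else 0))) := by
  rw [← ind_pair a p r, ← ind_pair b q s, ← ind_pair' a p r, ← ind_pair' b q s,
    Matrix.add_apply, P_apply, P_apply, Fin.rev_rev]
  ring

lemma emb_val {n : ℕ} (i : Fin n) : (emb i : ℕ) = i := rfl

def half {n : ℕ} (p : Fin (2 * n)) : Fin n :=
  if h : (p : ℕ) < n then ⟨p, h⟩ else ⟨2 * n - 1 - p, by have := p.isLt; omega⟩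

lemma emb_half_or {n : ℕ} (p : Fin (2 * n)) :
    emb (half p) = p ∨ (emb (half p)).rev = p := by
  have hp := p.isLt
  unfold half
  split_ifs with h
  · left; ext; simp [emb_val]
  · right; ext; rw [Fin.val_rev, emb_val]; simp; omega

lemma half_eq {n : ℕ} {p : Fin (2 * n)} {i : Fin n}
    (h : emb i = p ∨ (emb i).rev = p) : i = half p := by
  have hi := i.isLt
  have hp := p.isLt
  unfold half
  rcases h with h | h
  · have hv : (p : ℕ) = i := by rw [← h, emb_val]
    split_ifs with h'
    · ext; simp [hv]
    · omega
  · have hv : (p : ℕ) = 2 * n - (i + 1) := by rw [← h, Fin.val_rev, emb_val]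
    split_ifs with h'
    · omega
    · ext; simp; omega

lemma Rhat_apply {n : ℕ} (m : Bool → Fin (2*n) → Fin (2*n) → ℝ)
    (hm : ∀ ε a b, m ε a b = m ε a.rev b ∧ m ε a b = m ε a b.rev)
    (θ : ℝ) (p q r s : Fin (2*n)) :
    Rhat m θ (p, q) (r, s) = ∑ ε : Bool, (Real.exp (m ε p q * θ) : ℂ) *
      ((1/2 : ℂ) * ((if r = p ∧ s = q then (1:ℂ) else 0)
        + sgn ε * (if r = p.rev ∧ s = q.rev then 1 else 0))) := by
  unfold Rhat
  simp only [Matrix.sum_apply, Matrix.smul_apply, smul_eq_mul]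
  refine Finset.sum_congr rfl fun ε _ => ?_
  rw [Finset.sum_eq_single_of_mem (half p) (Finset.mem_univ _)]
  swap
  · intro i _ hi
    have hcond : ¬(emb i = p ∨ (emb i).rev = p) := fun h => hi (half_eq h)
    apply Finset.sum_eq_zero
    intro j _
    rw [PP_apply]
    simp [hcond]
  rw [Finset.sum_eq_single_of_mem (half q) (Finset.mem_univ _)]
  swap
  · intro j _ hj
    have hcond : ¬(emb j = q ∨ (emb j).rev = q) := fun h => hj (half_eq h)
    rw [PP_apply]
    simp [hcond]
  rw [PP_apply]
  have hp' := emb_half_or p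
  have hq' := emb_half_or q
  have hmp : ∀ j, m ε (emb (half p)) j = m ε p j := by
    rcases hp' with h | h
    · rw [h]; exact fun _ => rfl
    · intro j
      have h2 := congrArg Fin.rev h
      rw [Fin.rev_rev] at h2
      rw [h2, ← (hm ε p j).1]
  have hmq : m ε p (emb (half q)) = m ε p q := by
    rcases hq' with h | h
    · rw [h]
    · have h2 := congrArg Fin.rev h
      rw [Fin.rev_rev] at h2
      rw [h2, ← (hm ε p q).2]
  rw [hmp, hmq]
  have hcp : (emb (half p) = p ∨ (emb (half p)).rev = p) := hp'
  have hcq : (emb (half q) = q ∨ (emb (half q)).rev = q) := hq'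
  simp only [hcp, hcq, true_and, if_true, ind_mul, eq_self_iff_true]

lemma flipP_apply {N : ℕ} (p q u v : Fin N) :
    flipP N (p, q) (u, v) = if u = q ∧ v = p then 1 else 0 := by
  unfold flipP
  simp only [Matrix.sum_apply, Matrix.kroneckerMap_apply, E_apply]
  rw [Finset.sum_eq_single_of_mem p (Finset.mem_univ _)]
  · rw [Finset.sum_eq_single_of_mem q (Finset.mem_univ _)]
    · rcases eq_or_ne u q with h1 | h1
      · subst h1
        rcases eq_or_ne v p with h2 | h2
        · subst h2; simp
        · simp [h2, Ne.symm h2]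
      · simp [h1, Ne.symm h1]
    · intro b _ hb
      simp [hb]
  · intro a _ ha
    apply Finset.sum_eq_zero
    intro b _
    simp [ha]

lemma delta_sum1 {N : ℕ} (Y : Fin N → Fin N → ℂ) (a b : Fin N) :
    (∑ u : Fin N, ∑ v : Fin N, (if u = a ∧ v = b then (1:ℂ) else 0) * Y u v) = Y a b := by
  rw [Finset.sum_eq_single_of_mem a (Finset.mem_univ _)]
  · rw [Finset.sum_eq_single_of_mem b (Finset.mem_univ _)]
    · simp
    · intro v _ hv; simp [hv]
  · intro u _ hu
    apply Finset.sum_eq_zero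
    intro v _
    simp [hu]

lemma delta_sum {N : ℕ} (Y : Fin N → Fin N → ℂ) (c : ℂ) (a b : Fin N) :
    (∑ u : Fin N, ∑ v : Fin N, c * (if u = a ∧ v = b then (1:ℂ) else 0) * Y u v) = c * Y a b := by
  have : ∀ u v, c * (if u = a ∧ v = b then (1:ℂ) else 0) * Y u v
      = c * ((if u = a ∧ v = b then (1:ℂ) else 0) * Y u v) := fun u v => by ring
  simp only [this, ← Finset.mul_sum]
  rw [delta_sum1]

lemma flip_mul_apply {N : ℕ} (M : Matrix (Fin N × Fin N) (Fin N × Fin N) ℂ)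
    (p q : Fin N) (x : Fin N × Fin N) :
    (flipP N * M) (p, q) x = M (q, p) x := by
  rw [Matrix.mul_apply, Fintype.sum_prod_type]
  simp only [flipP_apply]
  exact delta_sum1 (fun u v => M (u, v) x) q p

lemma one_apply_pair {N : ℕ} (p q r s : Fin N) :
    (1 : Matrix (Fin N × Fin N) (Fin N × Fin N) ℂ) (p, q) (r, s)
      = if r = p ∧ s = q then 1 else 0 := by
  rw [Matrix.one_apply]
  rcases eq_or_ne r p with h1 | h1
  · subst h1
    rcases eq_or_ne s q with h2 | h2
    · subst h2; simp
    · simp [Prod.ext_iff, h2, Ne.symm h2]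
  · simp [Prod.ext_iff, h1, Ne.symm h1]

lemma ind_merge {α : Type*} [DecidableEq α] (a r b s : α) :
    (if a = r then (1:ℂ) else 0) * (if b = s then 1 else 0)
      = if r = a ∧ s = b then 1 else 0 := by
  rcases eq_or_ne a r with h1 | h1
  · subst h1
    rcases eq_or_ne b s with h2 | h2
    · subst h2; simp
    · simp [h2, Ne.symm h2]
  · simp [h1, Ne.symm h1]

lemma X_apply {N : ℕ} (m : Bool → Fin N → Fin N → ℝ) (θ : ℝ) (lam : ℂ)
    (p q r s : Fin N) :
    X m θ lam (p, q) (r, s) = (-(1/2) : ℂ) * ∑ ε : Bool,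
      (lam ^ 2 - Complex.exp (((m ε p q + m ε q p) * θ : ℝ) : ℂ))⁻¹ *
        (lam * ((if r = p ∧ s = q then (1:ℂ) else 0)
            + sgn ε * (if r = p.rev ∧ s = q.rev then 1 else 0))
          + Complex.exp (((m ε q p * θ : ℝ)) : ℂ) * ((if r = q ∧ s = p then (1:ℂ) else 0)
            + sgn ε * (if r = q.rev ∧ s = p.rev then 1 else 0))) := by
  unfold X
  simp only [Matrix.smul_apply, Matrix.sum_apply, Matrix.add_apply,
    Matrix.kroneckerMap_apply, E_apply, smul_eq_mul]
  congr 1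
  refine Finset.sum_congr rfl fun ε _ => ?_
  rw [Finset.sum_eq_single_of_mem p (Finset.mem_univ _)]
  swap
  · intro a _ ha
    apply Finset.sum_eq_zero
    intro b _
    simp [ha]
  rw [Finset.sum_eq_single_of_mem q (Finset.mem_univ _)]
  swap
  · intro b _ hb
    simp [hb]
  simp only [eq_self_iff_true, true_and, if_true, ind_merge]

set_option maxHeartbeats 2000000 in
/-- For `N = 2n`, whenever `λ² ≠ e^{(m_{ab}^{(ε)}+m_{ba}^{(ε)})θ}` for all `a,b,ε`:
`−i𝐕(θ) = X(θ)(R(θ) + λI) = I + 2λ X(θ)` (with `R(θ) = 𝐏R̂(θ)` and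
`X(θ) = (R(θ) − λI)⁻¹` given by its closed form), and the diagonal potential
coefficients (`𝐕 = ∑ V_{ab,cd}(ab)⊗(cd)`, so `V_{bb,dd}` is the entry of
`𝐕 = i(X(R+λI))` at row `(b,d)`, column `(b,d)`; for generic labels, `d ∉ {b, b̄}`) are
`V_{bb,dd} = −(i/2) ∑_ε (λ² + e^{(m_{bd}^{(ε)}+m_{db}^{(ε)})θ})/(λ² − e^{(m_{bd}^{(ε)}+m_{db}^{(ε)})θ})`. -/
theorem stmt_19 (n : ℕ) (m : Bool → Fin (2 * n) → Fin (2 * n) → ℝ)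
    (hm : ∀ ε a b, m ε a b = m ε a.rev b ∧ m ε a b = m ε a b.rev) (θ : ℝ) (lam : ℂ)
    (hlam : ∀ (ε : Bool) (a b : Fin (2 * n)),
      lam ^ 2 ≠ Complex.exp (((m ε a b + m ε b a) * θ : ℝ) : ℂ)) :
    X m θ lam * (flipP (2 * n) * Rhat m θ + lam • 1) = 1 + (2 * lam) • X m θ lam ∧
      ∀ b d : Fin (2 * n), d ≠ b → d ≠ b.rev →
        (Complex.I • (X m θ lam * (flipP (2 * n) * Rhat m θ + lam • 1))) (b, d) (b, d) =
          -(Complex.I / 2) * ∑ ε : Bool,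
            (lam ^ 2 + Complex.exp (((m ε b d + m ε d b) * θ : ℝ) : ℂ)) /
              (lam ^ 2 - Complex.exp (((m ε b d + m ε d b) * θ : ℝ) : ℂ)) := by
  have hrev : ∀ (ε : Bool) (a b : Fin (2 * n)), m ε a.rev b.rev = m ε a b :=
    fun ε a b => ((hm ε a b.rev).1.symm.trans (hm ε a b).2.symm)
  have hexp : ∀ (ε : Bool) (a b : Fin (2 * n)),
      Complex.exp (((m ε a b + m ε b a) * θ : ℝ) : ℂ)
        = Complex.exp ((m ε a b * θ : ℝ) : ℂ) * Complex.exp ((m ε b a * θ : ℝ) : ℂ) := by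
    intro ε a b
    rw [← Complex.exp_add]
    congr 1
    push_cast
    ring
  have hD : ∀ (ε : Bool) (a b : Fin (2 * n)),
      lam ^ 2 - Complex.exp ((m ε a b * θ : ℝ) : ℂ) * Complex.exp ((m ε b a * θ : ℝ) : ℂ) ≠ 0 := by
    intro ε a b
    rw [← hexp]
    exact sub_ne_zero.mpr (hlam ε a b)
  have h1 : X m θ lam * (flipP (2 * n) * Rhat m θ + lam • 1) = 1 + (2 * lam) • X m θ lam := by
    ext ⟨p, q⟩ ⟨r, s⟩
    rw [Matrix.mul_apply, Fintype.sum_prod_type]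
    have hY : ∀ u v : Fin (2 * n), (flipP (2 * n) * Rhat m θ + lam • 1) (u, v) (r, s)
        = (∑ ε : Bool, (Real.exp (m ε v u * θ) : ℂ) *
            ((1/2 : ℂ) * ((if r = v ∧ s = u then (1:ℂ) else 0)
              + sgn ε * (if r = v.rev ∧ s = u.rev then 1 else 0))))
          + lam * (if r = u ∧ s = v then 1 else 0) := by
      intro u v
      rw [Matrix.add_apply, flip_mul_apply, Matrix.smul_apply, one_apply_pair, smul_eq_mul,
        Rhat_apply m hm θ v u r s]
    have hXuv : ∀ u v : Fin (2 * n), X m θ lam (p, q) (u, v) =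
        (-(1/2) * lam * ((lam ^ 2 - Complex.exp ((m true p q * θ : ℝ) : ℂ)
            * Complex.exp ((m true q p * θ : ℝ) : ℂ))⁻¹
          + (lam ^ 2 - Complex.exp ((m false p q * θ : ℝ) : ℂ)
            * Complex.exp ((m false q p * θ : ℝ) : ℂ))⁻¹))
          * (if u = p ∧ v = q then (1:ℂ) else 0)
        + (-(1/2) * lam * ((lam ^ 2 - Complex.exp ((m true p q * θ : ℝ) : ℂ)
            * Complex.exp ((m true q p * θ : ℝ) : ℂ))⁻¹
          - (lam ^ 2 - Complex.exp ((m false p q * θ : ℝ) : ℂ)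
            * Complex.exp ((m false q p * θ : ℝ) : ℂ))⁻¹))
          * (if u = p.rev ∧ v = q.rev then (1:ℂ) else 0)
        + (-(1/2) * ((lam ^ 2 - Complex.exp ((m true p q * θ : ℝ) : ℂ)
            * Complex.exp ((m true q p * θ : ℝ) : ℂ))⁻¹ * Complex.exp ((m true q p * θ : ℝ) : ℂ)
          + (lam ^ 2 - Complex.exp ((m false p q * θ : ℝ) : ℂ)
            * Complex.exp ((m false q p * θ : ℝ) : ℂ))⁻¹ * Complex.exp ((m false q p * θ : ℝ) : ℂ)))
          * (if u = q ∧ v = p then (1:ℂ) else 0)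
        + (-(1/2) * ((lam ^ 2 - Complex.exp ((m true p q * θ : ℝ) : ℂ)
            * Complex.exp ((m true q p * θ : ℝ) : ℂ))⁻¹ * Complex.exp ((m true q p * θ : ℝ) : ℂ)
          - (lam ^ 2 - Complex.exp ((m false p q * θ : ℝ) : ℂ)
            * Complex.exp ((m false q p * θ : ℝ) : ℂ))⁻¹ * Complex.exp ((m false q p * θ : ℝ) : ℂ)))
          * (if u = q.rev ∧ v = p.rev then (1:ℂ) else 0) := by
      intro u v
      rw [X_apply, Fintype.sum_bool]
      simp only [sgn_true, sgn_false, hexp]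
      ring
    simp only [hXuv]
    simp only [add_mul, Finset.sum_add_distrib]
    rw [delta_sum, delta_sum, delta_sum, delta_sum]
    rw [hY p q, hY p.rev q.rev, hY q p, hY q.rev p.rev]
    rw [Matrix.add_apply, one_apply_pair, Matrix.smul_apply, smul_eq_mul, X_apply]
    simp only [Fin.rev_rev, hrev, Fintype.sum_bool, sgn_true, sgn_false, hexp,
      Complex.ofReal_exp]
    set d1 : ℂ := (if r = p ∧ s = q then (1:ℂ) else 0) with hd1
    set d2 : ℂ := (if r = p.rev ∧ s = q.rev then (1:ℂ) else 0) with hd2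
    set d3 : ℂ := (if r = q ∧ s = p then (1:ℂ) else 0) with hd3
    set d4 : ℂ := (if r = q.rev ∧ s = p.rev then (1:ℂ) else 0) with hd4
    set A1 : ℂ := Complex.exp ((m true p q * θ : ℝ) : ℂ) with hA1
    set A2 : ℂ := Complex.exp ((m false p q * θ : ℝ) : ℂ) with hA2
    set B1 : ℂ := Complex.exp ((m true q p * θ : ℝ) : ℂ) with hB1
    set B2 : ℂ := Complex.exp ((m false q p * θ : ℝ) : ℂ) with hB2
    have e1 : (lam ^ 2 - A1 * B1)⁻¹ * (lam ^ 2 - A1 * B1) = 1 := inv_mul_cancel₀ (hD true p q)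
    have e2 : (lam ^ 2 - A2 * B2)⁻¹ * (lam ^ 2 - A2 * B2) = 1 := inv_mul_cancel₀ (hD false p q)
    linear_combination (1/2 * (d1 + d2)) * e1 + (1/2 * (d1 - d2)) * e2
  refine ⟨h1, fun b d hb hbrev => ?_⟩
  rw [Matrix.smul_apply, h1, Matrix.add_apply, one_apply_pair, Matrix.smul_apply, smul_eq_mul,
    X_apply]
  have hne1 : ¬(b = b.rev) := Ne.symm (rev_ne_self b)
  have hne2 : ¬(b = d) := Ne.symm hb
  have hne3 : ¬(d = b.rev) := hbrev
  simp only [Fintype.sum_bool, sgn_true, sgn_false, hexp, hne1, hne2, hne3,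
    eq_self_iff_true, true_and, and_true, and_false, false_and, if_true, if_false,
    if_neg, ite_false, ite_true, smul_eq_mul]
  set A1 : ℂ := Complex.exp ((m true b d * θ : ℝ) : ℂ) with hA1
  set A2 : ℂ := Complex.exp ((m false b d * θ : ℝ) : ℂ) with hA2
  set B1 : ℂ := Complex.exp ((m true d b * θ : ℝ) : ℂ) with hB1
  set B2 : ℂ := Complex.exp ((m false d b * θ : ℝ) : ℂ) with hB2
  have e1 : (lam ^ 2 - A1 * B1)⁻¹ * (lam ^ 2 - A1 * B1) = 1 := inv_mul_cancel₀ (hD true b d)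
  have e2 : (lam ^ 2 - A2 * B2)⁻¹ * (lam ^ 2 - A2 * B2) = 1 := inv_mul_cancel₀ (hD false b d)
  linear_combination (-(Complex.I/2)) * e1 + (-(Complex.I/2)) * e2
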